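/- Let (𝒞,𝒳,𝒟) be a localization triple in an additive category 𝒜. For any morphism f: A → B in 𝒜 there exists a morphism f̌: Q(A) → Q(B) such that r_B ∘ f̌ = f ∘ r_A. Moreover, if g: A → B satisfies ḡ = f̄ in 𝒜/𝒳 and ǧ: Q(A) → Q(B) satisfies r_B ∘ ǧ = g ∘ r_A, then f̌ − ǧ factors through an object of 𝒳, i.e. the class of f̌ in the stable category is uniquely determined by f̄. -/
import Mathlib


open CategoryTheory CategoryTheory.Limits

universe w' w v u

namespace LiHomotopy

variable {𝒜 : Type u} [Category.{v} 𝒜] [Preadditive 𝒜] [HasZeroObject 𝒜]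
  [HasBinaryBiproducts 𝒜]

/-- `f` factors through an object belonging to `X`. -/
def FactorsThruSet (X : Set 𝒜) {A B : 𝒜} (f : A ⟶ B) : Prop :=
  ∃ (M : 𝒜) (_ : M ∈ X) (u : A ⟶ M) (v : M ⟶ B), f = u ≫ v

/-- A localization triple `(C, X, D)` in an additive category `𝒜`, consisting of
full additive subcategories `X ⊆ C ∩ D` together with the chosen approximation
sequences of Definition 3.2. -/
structure LocalizationTriple (C X D : Set 𝒜) where
  X_sub_C : X ⊆ C
  X_sub_D : X ⊆ D
  C_zero : ∀ Z : 𝒜, IsZero Z → Z ∈ C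
  C_sum : ∀ {M N : 𝒜}, M ∈ C → N ∈ C → (M ⊞ N) ∈ C
  X_zero : ∀ Z : 𝒜, IsZero Z → Z ∈ X
  X_sum : ∀ {M N : 𝒜}, M ∈ X → N ∈ X → (M ⊞ N) ∈ X
  D_zero : ∀ Z : 𝒜, IsZero Z → Z ∈ D
  D_sum : ∀ {M N : 𝒜}, M ∈ D → N ∈ D → (M ⊞ N) ∈ D
  /-- the chosen `C`-precover `Q(A) → A` -/
  Qobj : 𝒜 → 𝒜
  Wl : 𝒜 → 𝒜
  r : ∀ A : 𝒜, Qobj A ⟶ A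
  ω : ∀ A : 𝒜, Wl A ⟶ Qobj A
  Qobj_mem : ∀ A : 𝒜, Qobj A ∈ C
  r_precover : ∀ (A C' : 𝒜), C' ∈ C → ∀ g : C' ⟶ A, ∃ h : C' ⟶ Qobj A, h ≫ r A = g
  ω_r : ∀ A : 𝒜, ω A ≫ r A = 0
  ω_weakKernel : ∀ (A T : 𝒜) (g : T ⟶ Qobj A), g ≫ r A = 0 → ∃ h : T ⟶ Wl A, h ≫ ω A = g
  Wl_perp : ∀ (A C' : 𝒜), C' ∈ C → ∀ g : C' ⟶ Wl A, FactorsThruSet X g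
  /-- the chosen `D`-preenvelope `A → R(A)` -/
  Robj : 𝒜 → 𝒜
  Wr : 𝒜 → 𝒜
  j : ∀ A : 𝒜, A ⟶ Robj A
  τ : ∀ A : 𝒜, Robj A ⟶ Wr A
  Robj_mem : ∀ A : 𝒜, Robj A ∈ D
  j_preenvelope : ∀ (A D' : 𝒜), D' ∈ D → ∀ g : A ⟶ D', ∃ h : Robj A ⟶ D', j A ≫ h = g
  j_τ : ∀ A : 𝒜, j A ≫ τ A = 0
  τ_weakCokernel : ∀ (A T : 𝒜) (g : Robj A ⟶ T), j A ≫ g = 0 → ∃ h : Wr A ⟶ T, τ A ≫ h = g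
  Wr_perp : ∀ (A D' : 𝒜), D' ∈ D → ∀ g : Wr A ⟶ D', FactorsThruSet X g
  Qobj_mem_of_D : ∀ A : 𝒜, A ∈ D → Qobj A ∈ C ∩ D
  Robj_mem_of_C : ∀ A : 𝒜, A ∈ C → Robj A ∈ C ∩ D

/-- The class `𝒮` of morphisms `s` such that `R(Q(s̄))` is an isomorphism in the
stable category of `C ∩ D` modulo `X`, expressed via representatives. -/
def SClass {C X D : Set 𝒜} (L : LocalizationTriple C X D) : MorphismProperty 𝒜 :=
  fun A B s =>
    ∃ (sc : L.Qobj A ⟶ L.Qobj B) (sf : L.Robj (L.Qobj A) ⟶ L.Robj (L.Qobj B)),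
      sc ≫ L.r B = L.r A ≫ s ∧
      L.j (L.Qobj A) ≫ sf = sc ≫ L.j (L.Qobj B) ∧
      ∃ g : L.Robj (L.Qobj B) ⟶ L.Robj (L.Qobj A),
        FactorsThruSet X (sf ≫ g - 𝟙 _) ∧ FactorsThruSet X (g ≫ sf - 𝟙 _)

lemma factorsThruSet_add {C X D : Set 𝒜} (L : LocalizationTriple C X D)
    {A B : 𝒜} {f g : A ⟶ B} (hf : FactorsThruSet X f) (hg : FactorsThruSet X g) :
    FactorsThruSet X (f + g) := by
  obtain ⟨M, hM, u, v, rfl⟩ := hf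
  obtain ⟨N, hN, u', v', rfl⟩ := hg
  exact ⟨M ⊞ N, L.X_sum hM hN, biprod.lift u u', biprod.desc v v', by simp⟩

theorem creplacement_exists_and_unique {C X D : Set 𝒜} (L : LocalizationTriple C X D)
    {A B : 𝒜} (f : A ⟶ B) :
    (∃ fc : L.Qobj A ⟶ L.Qobj B, fc ≫ L.r B = L.r A ≫ f) ∧
    (∀ (g : A ⟶ B) (fc gc : L.Qobj A ⟶ L.Qobj B),
      FactorsThruSet X (f - g) →
      fc ≫ L.r B = L.r A ≫ f → gc ≫ L.r B = L.r A ≫ g →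
      FactorsThruSet X (fc - gc)) := by
  constructor
  · exact L.r_precover B (L.Qobj A) (L.Qobj_mem A) (L.r A ≫ f)
  · intro g fc gc hfg hfc hgc
    obtain ⟨M, hM, u, v, huv⟩ := hfg
    obtain ⟨h, hh⟩ := L.r_precover B M (L.X_sub_C hM) v
    have h0 : (fc - gc - L.r A ≫ u ≫ h) ≫ L.r B = 0 := by
      simp only [Preadditive.sub_comp, hfc, hgc, Category.assoc, hh]
      rw [← Preadditive.comp_sub, ← Preadditive.comp_sub, ← huv]
      simp
    obtain ⟨k, hk⟩ := L.ω_weakKernel B _ _ h0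
    obtain ⟨N, hN, p, q, hpq⟩ :=
      L.Wl_perp B (L.Qobj A) (L.Qobj_mem A) k
    have : fc - gc = (L.r A ≫ u ≫ h) + k ≫ L.ω B := by
      rw [hk]; abel
    rw [this]
    exact factorsThruSet_add L ⟨M, hM, L.r A ≫ u, h, by simp⟩
      ⟨N, hN, p, q ≫ L.ω B, by rw [hpq]; simp⟩

end LiHomotopy
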